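/- Let Λ_d = ℤ_ℓ[[T_1,...,T_d]], let 𝔄 ⊂ Λ_d be the kernel of a surjection Λ_d → Λ = ℤ_ℓ[[T]], and let M be a finitely generated Λ_d-module. If M/𝔄M is a torsion Λ-module, then M is a torsion Λ_d-module. -/

import Mathlib

/-- Let `𝔄` be the kernel of a surjection `π : Λ_d → Λ` and `M` a
finitely generated `Λ_d`-module. If `M/𝔄M` is a torsion `Λ`-module (for the induced
`Λ`-action), then `M` is a torsion `Λ_d`-module. -/
theorem stmt13 (ℓ : ℕ) [Fact ℓ.Prime] (d : ℕ) (hd : 2 ≤ d)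
    (π : MvPowerSeries (Fin d) ℤ_[ℓ] →+* PowerSeries ℤ_[ℓ]) (hπ : Function.Surjective π)
    (M : Type) [AddCommGroup M] [Module (MvPowerSeries (Fin d) ℤ_[ℓ]) M]
    [Module.Finite (MvPowerSeries (Fin d) ℤ_[ℓ]) M]
    [Module (PowerSeries ℤ_[ℓ])
      (M ⧸ (RingHom.ker π • (⊤ : Submodule (MvPowerSeries (Fin d) ℤ_[ℓ]) M)))]
    (hcompat : ∀ (a : MvPowerSeries (Fin d) ℤ_[ℓ])
      (x : M ⧸ (RingHom.ker π • (⊤ : Submodule (MvPowerSeries (Fin d) ℤ_[ℓ]) M))),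
      π a • x = a • x)
    (htors : Module.IsTorsion (PowerSeries ℤ_[ℓ])
      (M ⧸ (RingHom.ker π • (⊤ : Submodule (MvPowerSeries (Fin d) ℤ_[ℓ]) M)))) :
    Module.IsTorsion (MvPowerSeries (Fin d) ℤ_[ℓ]) M := by
  classical
  -- generators of the quotient module
  obtain ⟨s, hs⟩ := Module.Finite.fg_top (R := MvPowerSeries (Fin d) ℤ_[ℓ])
    (M := M ⧸ (RingHom.ker π • (⊤ : Submodule (MvPowerSeries (Fin d) ℤ_[ℓ]) M)))
  -- torsion elements killing each generator
  have hg : ∀ x : M ⧸ (RingHom.ker π • (⊤ : Submodule (MvPowerSeries (Fin d) ℤ_[ℓ]) M)),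
      ∃ g : nonZeroDivisors (PowerSeries ℤ_[ℓ]), (g : PowerSeries ℤ_[ℓ]) • x = 0 :=
    fun x => @htors x
  choose g hgx using hg
  set f : nonZeroDivisors (PowerSeries ℤ_[ℓ]) := ∏ x ∈ s, g x with hf
  have hfx : ∀ x ∈ s, (f : PowerSeries ℤ_[ℓ]) • x = 0 := by
    intro x hx
    have hprod : (f : PowerSeries ℤ_[ℓ]) =
        (∏ y ∈ s.erase x, (g y : PowerSeries ℤ_[ℓ])) * (g x : PowerSeries ℤ_[ℓ]) := by
      rw [hf]
      push_cast
      rw [Finset.prod_erase_mul _ _ hx]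
    rw [hprod, mul_smul, hgx x, smul_zero]
  -- lift f to a
  obtain ⟨a, ha⟩ := hπ (f : PowerSeries ℤ_[ℓ])
  have haq : ∀ q : M ⧸ (RingHom.ker π • (⊤ : Submodule (MvPowerSeries (Fin d) ℤ_[ℓ]) M)),
      a • q = 0 := by
    have key : ∀ q ∈ Submodule.span (MvPowerSeries (Fin d) ℤ_[ℓ])
        (s : Set (M ⧸ (RingHom.ker π • (⊤ : Submodule (MvPowerSeries (Fin d) ℤ_[ℓ]) M)))),
        a • q = 0 := by
      intro q hq
      induction hq using Submodule.span_induction with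
      | mem x hx => rw [← hcompat a x, ha]; exact hfx x hx
      | zero => simp
      | add x y _ _ hx hy => rw [smul_add, hx, hy, add_zero]
      | smul r x _ hx => rw [smul_comm, hx, smul_zero]
    intro q
    exact key q (hs ▸ Submodule.mem_top)
  have haM : ∀ m : M, a • m ∈ RingHom.ker π • (⊤ : Submodule (MvPowerSeries (Fin d) ℤ_[ℓ]) M) := by
    intro m
    have : (Submodule.Quotient.mk (a • m) :
        M ⧸ (RingHom.ker π • (⊤ : Submodule (MvPowerSeries (Fin d) ℤ_[ℓ]) M))) = 0 := by
      rw [Submodule.Quotient.mk_smul, haq]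
    exact (Submodule.Quotient.mk_eq_zero _).mp this
  -- Cayley–Hamilton / determinant trick
  set φ : Module.End (MvPowerSeries (Fin d) ℤ_[ℓ]) M :=
    algebraMap (MvPowerSeries (Fin d) ℤ_[ℓ]) (Module.End (MvPowerSeries (Fin d) ℤ_[ℓ]) M) a
    with hφ
  have hrange : LinearMap.range φ ≤
      RingHom.ker π • (⊤ : Submodule (MvPowerSeries (Fin d) ℤ_[ℓ]) M) := by
    rintro _ ⟨m, rfl⟩
    simpa [hφ, Module.algebraMap_end_apply] using haM m
  obtain ⟨p, hpm, -, hpc, hpa⟩ :=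
    LinearMap.exists_monic_and_coeff_mem_pow_and_aeval_eq_zero_of_range_le_smul
      (MvPowerSeries (Fin d) ℤ_[ℓ]) φ (RingHom.ker π) hrange
  set r : MvPowerSeries (Fin d) ℤ_[ℓ] := p.eval a with hr
  have hkill : ∀ m : M, r • m = 0 := by
    intro m
    have h1 : Polynomial.aeval φ p =
        algebraMap (MvPowerSeries (Fin d) ℤ_[ℓ]) (Module.End (MvPowerSeries (Fin d) ℤ_[ℓ]) M) r := by
      rw [hφ, Polynomial.aeval_algebraMap_apply_eq_algebraMap_eval]
    have h2 := congrArg (fun (ψ : Module.End (MvPowerSeries (Fin d) ℤ_[ℓ]) M) => ψ m)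
      (h1.symm.trans hpa)
    simpa [Module.algebraMap_end_apply] using h2
  -- π r = f ^ deg p ≠ 0
  have hmap : p.map π = Polynomial.X ^ p.natDegree := by
    ext k
    rw [Polynomial.coeff_map]
    rcases lt_trichotomy k p.natDegree with h | h | h
    · have hmem : p.coeff k ∈ RingHom.ker π :=
        Ideal.pow_le_self (Nat.sub_ne_zero_of_lt h) (hpc k)
      rw [RingHom.mem_ker] at hmem
      rw [hmem, Polynomial.coeff_X_pow, if_neg (Nat.ne_of_lt h)]
    · rw [h, Polynomial.Monic.coeff_natDegree hpm, map_one, Polynomial.coeff_X_pow, if_pos rfl]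
    · rw [Polynomial.coeff_eq_zero_of_natDegree_lt h, map_zero, Polynomial.coeff_X_pow,
        if_neg (Nat.ne_of_gt h)]
  have hπr : π r = (f : PowerSeries ℤ_[ℓ]) ^ p.natDegree := by
    have heval : π (p.eval a) = (p.map π).eval (π a) := by
      rw [Polynomial.eval_map, Polynomial.eval₂_hom]
    rw [hr, heval, hmap, ha, Polynomial.eval_pow, Polynomial.eval_X]
  have hfne : (f : PowerSeries ℤ_[ℓ]) ≠ 0 := nonZeroDivisors.ne_zero f.2
  have hrne : r ≠ 0 := by
    intro h
    exact pow_ne_zero p.natDegree hfne (by rw [← hπr, h, map_zero])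
  intro m
  exact ⟨⟨r, mem_nonZeroDivisors_of_ne_zero hrne⟩, hkill m⟩
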